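/- Let G be a connected finite simple graph on n vertices with even diameter d, let P = v_1 ∼ v_2 ∼ ⋯ ∼ v_{d+1} be a diameter path of G, and suppose η(G) = n − d − 1. Then every vertex of G not on P is adjacent to at least one vertex of P, i.e., d(x, P) = 1 for every x ∈ V(G) ∖ V(P). -/

import Mathlib

open Classical in
/-- The adjacency matrix of a finite simple graph over `ℝ`. -/
noncomputable def adjMat {V : Type} [Fintype V] (G : SimpleGraph V) : Matrix V V ℝ :=
  Matrix.of fun i j => if G.Adj i j then (1 : ℝ) else 0

/-- The nullity `η(G)` of a finite simple graph: the dimension of the kernel of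
its adjacency matrix over `ℝ`. -/
noncomputable def nullity {V : Type} [Fintype V] (G : SimpleGraph V) : ℕ :=
  Module.finrank ℝ (LinearMap.ker (adjMat G).mulVecLin)

/-- Upper bound on distances along a path. -/
lemma path_dist_ub {V : Type} (G : SimpleGraph V) (hG : G.Connected) (d : ℕ)
    (p : Fin (d+1) → V)
    (hstep : ∀ (t : ℕ) (ht : t < d), G.Adj (p ⟨t, by omega⟩) (p ⟨t+1, by omega⟩)) :
    ∀ (k i : ℕ) (h : i + k ≤ d), G.dist (p ⟨i, by omega⟩) (p ⟨i + k, by omega⟩) ≤ k := by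
  intro k
  induction k with
  | zero => intro i h; simp [SimpleGraph.dist_self]
  | succ k ih =>
    intro i h
    show G.dist (p ⟨i, by omega⟩) (p ⟨i+k+1, by omega⟩) ≤ k+1
    have t1 := hG.dist_triangle (u := p ⟨i, by omega⟩) (v := p ⟨i+k, by omega⟩)
      (w := p ⟨i+k+1, by omega⟩)
    have h2 : G.dist (p ⟨i+k, by omega⟩) (p ⟨i+k+1, by omega⟩) = 1 :=
      SimpleGraph.dist_eq_one_iff_adj.mpr (hstep (i+k) (by omega))
    have h3 := ih i (by omega)
    omega

/-- Upper bound, general indices. -/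
lemma path_dist_ub' {V : Type} (G : SimpleGraph V) (hG : G.Connected) (d : ℕ)
    (p : Fin (d+1) → V)
    (hstep : ∀ (t : ℕ) (ht : t < d), G.Adj (p ⟨t, by omega⟩) (p ⟨t+1, by omega⟩)) :
    ∀ (i j : ℕ) (hij : i ≤ j) (h : j ≤ d), G.dist (p ⟨i, by omega⟩) (p ⟨j, by omega⟩) ≤ j - i := by
  intro i j hij h
  have := path_dist_ub G hG d p hstep (j - i) i (by omega)
  have e : (⟨i + (j-i), by omega⟩ : Fin (d+1)) = ⟨j, by omega⟩ := Fin.ext (by simp; omega)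
  rwa [e] at this

/-- Distances along a diameter path are exact. -/
lemma path_dist_exact {V : Type} (G : SimpleGraph V) (hG : G.Connected) (d : ℕ)
    (p : Fin (d+1) → V)
    (hstep : ∀ (t : ℕ) (ht : t < d), G.Adj (p ⟨t, by omega⟩) (p ⟨t+1, by omega⟩))
    (hdist : G.dist (p ⟨0, by omega⟩) (p ⟨d, by omega⟩) = d) :
    ∀ (i j : ℕ) (hij : i ≤ j) (hj : j ≤ d),
      G.dist (p ⟨i, by omega⟩) (p ⟨j, by omega⟩) = j - i := by
  intro i j hij hj
  have hub := path_dist_ub' G hG d p hstep i j hij hj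
  have hub1 := path_dist_ub' G hG d p hstep 0 i (by omega) (by omega)
  have hub2 := path_dist_ub' G hG d p hstep j d hj (le_refl d)
  have t1 := hG.dist_triangle (u := p ⟨0, by omega⟩) (v := p ⟨i, by omega⟩)
    (w := p ⟨d, by omega⟩)
  have t2 := hG.dist_triangle (u := p ⟨i, by omega⟩) (v := p ⟨j, by omega⟩)
    (w := p ⟨d, by omega⟩)
  omega

lemma stmt12_aux {V : Type} [Fintype V] (G : SimpleGraph V)
    (hG : G.Connected) (d : ℕ)
    (p : Fin (d + 1) → V)
    (hstep : ∀ (t : ℕ) (ht : t < d), G.Adj (p ⟨t, by omega⟩) (p ⟨t+1, by omega⟩))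
    (hdist' : G.dist (p ⟨0, by omega⟩) (p ⟨d, by omega⟩) = d)
    (hnull : nullity G = Fintype.card V - d - 1)
    (x : V) (hx : x ∉ Set.range p)
    (hcon : ∀ i : Fin (d + 1), ¬ G.Adj x (p i)) : False := by
  classical
  have hexact := path_dist_exact G hG d p hstep hdist'
  -- injectivity on indices
  have hne : ∀ (i j : ℕ) (hi : i ≤ d) (hj : j ≤ d),
      p ⟨i, by omega⟩ = p ⟨j, by omega⟩ → i = j := by
    intro i j hi hj hpij
    by_contra hne
    rcases Nat.lt_or_ge i j with hlt | hge
    · have := hexact i j (by omega) hj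
      rw [hpij, SimpleGraph.dist_self] at this
      omega
    · have := hexact j i (by omega) hi
      rw [← hpij, SimpleGraph.dist_self] at this
      omega
  -- induced path: adjacency only between consecutive vertices
  have hadjchar : ∀ (i j : ℕ) (hi : i ≤ d) (hj : j ≤ d),
      G.Adj (p ⟨i, by omega⟩) (p ⟨j, by omega⟩) → i + 1 = j ∨ j + 1 = i := by
    intro i j hi hj hA
    have hij : i ≠ j := by
      intro h
      subst h
      exact G.irrefl (by exact hA)
    rcases Nat.lt_or_ge i j with hlt | hge
    · have h1 : G.dist (p ⟨i, by omega⟩) (p ⟨j, by omega⟩) = 1 :=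
        SimpleGraph.dist_eq_one_iff_adj.mpr hA
      have := hexact i j (by omega) hj
      omega
    · have h1 : G.dist (p ⟨j, by omega⟩) (p ⟨i, by omega⟩) = 1 :=
        SimpleGraph.dist_eq_one_iff_adj.mpr hA.symm
      have := hexact j i (by omega) hi
      omega
  -- a neighbor y of x
  have hxnp : x ≠ p 0 := fun h => hx ⟨0, h.symm⟩
  obtain ⟨w⟩ := hG.preconnected x (p 0)
  obtain ⟨y, hxy⟩ : ∃ y, G.Adj x y := by
    cases w with
    | nil => exact absurd rfl hxnp
    | cons h _ => exact ⟨_, h⟩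
  have hynp : ∀ i : Fin (d+1), y ≠ p i := by
    intro i h
    exact hcon i (h ▸ hxy)
  have hxny : x ≠ y := hxy.ne
  -- the embedding of the small index set
  set g : Fin (d+3) → V := fun j =>
    if h : (j : ℕ) < d + 1 then p ⟨(j : ℕ), h⟩ else if (j : ℕ) = d + 1 then y else x
    with hg
  have gp : ∀ (k : ℕ) (h : k < d + 1), g ⟨k, by omega⟩ = p ⟨k, h⟩ := by
    intro k h; simp only [hg]; rw [dif_pos h]
  have gy : g ⟨d+1, by omega⟩ = y := by
    simp only [hg]
    rw [dif_neg (by omega)]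
    simp
  have gx : g ⟨d+2, by omega⟩ = x := by
    simp only [hg]
    rw [dif_neg (by omega)]
    rw [if_neg (by omega)]
  have ginj : Function.Injective g := by
    intro a b hab
    have ha := a.isLt; have hb := b.isLt
    apply Fin.ext
    simp only [hg] at hab
    by_cases h1 : (a : ℕ) < d + 1 <;> by_cases h2 : (b : ℕ) < d + 1
    · rw [dif_pos h1, dif_pos h2] at hab
      exact hne a b (by omega) (by omega) hab
    · rw [dif_pos h1, dif_neg h2] at hab
      by_cases h3 : (b : ℕ) = d + 1
      · rw [if_pos h3] at hab; exact absurd hab.symm (hynp _)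
      · rw [if_neg h3] at hab; exact absurd ⟨_, hab⟩ hx
    · rw [dif_neg h1, dif_pos h2] at hab
      by_cases h3 : (a : ℕ) = d + 1
      · rw [if_pos h3] at hab; exact absurd hab (hynp _)
      · rw [if_neg h3] at hab; exact absurd ⟨_, hab.symm⟩ hx
    · by_cases h3 : (a : ℕ) = d + 1 <;> by_cases h4 : (b : ℕ) = d + 1
      · omega
      · rw [dif_neg h1, dif_neg h2, if_pos h3, if_neg h4] at hab
        exact absurd hab.symm hxny
      · rw [dif_neg h1, dif_neg h2, if_neg h3, if_pos h4] at hab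
        exact absurd hab hxny
      · omega
  -- the compressed matrix M = (Matrix.transpose E) * A * E
  set A : Matrix V V ℝ := adjMat G with hA
  set E : Matrix V (Fin (d+3)) ℝ := Matrix.of fun u j => if u = g j then (1 : ℝ) else 0
    with hE
  set M : Matrix (Fin (d+3)) (Fin (d+3)) ℝ := (Matrix.transpose E) * A * E with hM
  have hEA : ∀ (i : Fin (d+3)) (u : V), ((Matrix.transpose E) * A) i u = A (g i) u := by
    intro i u
    rw [Matrix.mul_apply]
    simp [hE, Matrix.transpose_apply, ite_mul]
  have hMent : ∀ i j : Fin (d+3), M i j = (if G.Adj (g i) (g j) then (1 : ℝ) else 0) := by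
    intro i j
    rw [hM, Matrix.mul_apply]
    simp only [hEA]
    simp [hE, mul_ite, mul_one, mul_zero]
    rfl
  -- the key kernel lemma
  have key : ∀ v : Fin (d+3) → ℝ, M.mulVec v = 0 → v ⟨0, by omega⟩ = 0 → v = 0 := by
    intro v hv h0
    have hrow : ∀ i : Fin (d+3), ∑ j, (if G.Adj (g i) (g j) then v j else 0) = 0 := by
      intro i
      have := congrFun hv i
      simp only [Matrix.mulVec, dotProduct, hMent, Pi.zero_apply, ite_mul, one_mul,
        zero_mul] at this
      exact this
    -- v(y) = 0, from the row of x
    have hy0 : v ⟨d+1, by omega⟩ = 0 := by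
      have h := hrow ⟨d+2, by omega⟩
      rw [Finset.sum_eq_single (⟨d+1, by omega⟩ : Fin (d+3))] at h
      · rwa [gx, gy, if_pos hxy] at h
      · intro b _ hbne
        have hb := b.isLt
        rcases Nat.lt_or_ge (b : ℕ) (d+1) with h1 | h1
        · have : g b = p ⟨(b : ℕ), h1⟩ := by
            simp only [hg]
            exact dif_pos h1
          rw [gx, this, if_neg (hcon _)]
        · have h2 : (b : ℕ) = d + 2 := by
            rcases Nat.eq_or_lt_of_le h1 with h3 | h3
            · exact absurd (Fin.ext h3.symm : b = ⟨d+1, by omega⟩) hbne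
            · omega
          have hbb : b = ⟨d+2, by omega⟩ := Fin.ext h2
          rw [gx, hbb, gx, if_neg (G.irrefl)]
      · intro habs; exact absurd (Finset.mem_univ _) habs
    -- all path values vanish
    have hpath : ∀ (k : ℕ) (hk : k ≤ d), v ⟨k, by omega⟩ = 0 := by
      intro k
      induction k using Nat.strong_induction_on with
      | _ k IH =>
        intro hk
        match k, hk with
        | 0, _ => exact h0
        | (t+1), hk =>
          have h := hrow ⟨t, by omega⟩
          rw [Finset.sum_eq_single (⟨t+1, by omega⟩ : Fin (d+3))] at h
          · rw [gp t (by omega), gp (t+1) (by omega), if_pos (hstep t (by omega))] at h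
            exact h
          · intro b _ hbne
            have hb := b.isLt
            rcases Nat.lt_or_ge (b : ℕ) (d+1) with h1 | h1
            · have hgb : g b = p ⟨(b : ℕ), h1⟩ := by
                simp only [hg]
                exact dif_pos h1
              rw [gp t (by omega), hgb]
              by_cases hA2 : G.Adj (p ⟨t, by omega⟩) (p ⟨(b : ℕ), h1⟩)
              · rcases hadjchar t (b : ℕ) (by omega) (by omega) hA2 with h2 | h2
                · exact absurd (Fin.ext h2.symm : b = ⟨t+1, by omega⟩) hbne
                · rw [if_pos hA2]
                  exact IH (b : ℕ) (by omega) (by omega)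
              · rw [if_neg hA2]
            · rcases Nat.eq_or_lt_of_le h1 with h3 | h3
              · have hbb : b = ⟨d+1, by omega⟩ := Fin.ext h3.symm
                rw [hbb, gy, gp t (by omega)]
                by_cases hA2 : G.Adj (p ⟨t, by omega⟩) y
                · rw [if_pos hA2]; exact hy0
                · rw [if_neg hA2]
              · have hbb : b = ⟨d+2, by omega⟩ := Fin.ext ((by omega : (b : ℕ) = d + 2))
                rw [hbb, gx, gp t (by omega)]
                rw [if_neg (fun h => hcon _ h.symm)]
          · intro habs; exact absurd (Finset.mem_univ _) habs
    -- v(x) = 0, from the row of y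
    have hx0 : v ⟨d+2, by omega⟩ = 0 := by
      have h := hrow ⟨d+1, by omega⟩
      rw [Finset.sum_eq_single (⟨d+2, by omega⟩ : Fin (d+3))] at h
      · rwa [gy, gx, if_pos hxy.symm] at h
      · intro b _ hbne
        have hb := b.isLt
        rcases Nat.lt_or_ge (b : ℕ) (d+1) with h1 | h1
        · have hgb : g b = p ⟨(b : ℕ), h1⟩ := by
            simp only [hg]
            exact dif_pos h1
          rw [gy, hgb]
          by_cases hA2 : G.Adj y (p ⟨(b : ℕ), h1⟩)
          · rw [if_pos hA2]
            exact hpath (b : ℕ) (by omega)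
          · rw [if_neg hA2]
        · have h2 : (b : ℕ) = d + 1 := by
            rcases Nat.eq_or_lt_of_le h1 with h3 | h3
            · exact h3.symm
            · exact absurd (Fin.ext ((by omega : (b : ℕ) = d + 2)) : b = ⟨d+2, by omega⟩) hbne
          have hbb : b = ⟨d+1, by omega⟩ := Fin.ext h2
          rw [gy, hbb, gy, if_neg (G.irrefl)]
      · intro habs; exact absurd (Finset.mem_univ _) habs
    funext j
    have hj := j.isLt
    rcases Nat.lt_or_ge (j : ℕ) (d+1) with h1 | h1
    · exact hpath (j : ℕ) (by omega)
    · rcases Nat.eq_or_lt_of_le h1 with h3 | h3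
      · have : j = ⟨d+1, by omega⟩ := Fin.ext h3.symm
        rw [this]; exact hy0
      · have : j = ⟨d+2, by omega⟩ := Fin.ext ((by omega : (j : ℕ) = d + 2))
        rw [this]; exact hx0
  -- the kernel of M is at most 1-dimensional
  have hker : Module.finrank ℝ ↥(LinearMap.ker M.mulVecLin) ≤ 1 := by
    set φ : ↥(LinearMap.ker M.mulVecLin) →ₗ[ℝ] ℝ :=
      (LinearMap.proj (⟨0, by omega⟩ : Fin (d+3))).comp (LinearMap.ker M.mulVecLin).subtype
      with hφ
    have hinj : Function.Injective φ := by
      rw [← LinearMap.ker_eq_bot]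
      rw [Submodule.eq_bot_iff]
      rintro ⟨v, hv⟩ hz
      have hv' : M.mulVec v = 0 := hv
      have h0 : v ⟨0, by omega⟩ = 0 := hz
      exact Subtype.ext (key v hv' h0)
    calc Module.finrank ℝ ↥(LinearMap.ker M.mulVecLin) ≤ Module.finrank ℝ ℝ :=
          LinearMap.finrank_le_finrank_of_injective hinj
      _ = 1 := Module.finrank_self ℝ
  -- rank bookkeeping
  have hrkM : M.rank + Module.finrank ℝ ↥(LinearMap.ker M.mulVecLin) = d + 3 := by
    rw [Matrix.rank]
    rw [LinearMap.finrank_range_add_finrank_ker M.mulVecLin]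
    rw [Module.finrank_fintype_fun_eq_card, Fintype.card_fin]
  have hrkA : A.rank + nullity G = Fintype.card V := by
    rw [Matrix.rank, nullity, ← hA]
    rw [LinearMap.finrank_range_add_finrank_ker A.mulVecLin]
    rw [Module.finrank_fintype_fun_eq_card]
  have hMA : M.rank ≤ A.rank := by
    calc M.rank ≤ ((Matrix.transpose E) * A).rank := Matrix.rank_mul_le_left _ _
      _ ≤ A.rank := Matrix.rank_mul_le_right _ _
  have hcard : d + 3 ≤ Fintype.card V := by
    have := Fintype.card_le_of_injective g ginj
    rwa [Fintype.card_fin] at this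
  omega

/-- Let `G` be connected with even diameter `d`, let
`p 0 ∼ p 1 ∼ ⋯ ∼ p d` be a diameter path (a shortest path realizing the diameter),
and suppose `η(G) = n - d - 1`. Then every vertex not on the path is adjacent to
some vertex of the path, i.e. `d(x, P) = 1`. -/
theorem stmt12 {V : Type} [Fintype V] (G : SimpleGraph V)
    (hG : G.Connected) (heven : Even G.diam)
    (p : Fin (G.diam + 1) → V)
    (hadj : ∀ i : Fin G.diam, G.Adj (p i.castSucc) (p i.succ))
    (hdist : G.dist (p 0) (p (Fin.last G.diam)) = G.diam)
    (hnull : nullity G = Fintype.card V - G.diam - 1) :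
    ∀ x : V, x ∉ Set.range p → ∃ i : Fin (G.diam + 1), G.Adj x (p i) := by
  intro x hx
  by_contra hcon
  push_neg at hcon
  have hstep : ∀ (t : ℕ) (ht : t < G.diam),
      G.Adj (p ⟨t, by omega⟩) (p ⟨t+1, by omega⟩) := by
    intro t ht
    have := hadj ⟨t, ht⟩
    simpa [Fin.castSucc, Fin.succ, Fin.castAdd, Fin.castLE] using this
  have hdist' : G.dist (p ⟨0, by omega⟩) (p ⟨G.diam, by omega⟩) = G.diam := by
    convert hdist using 2
    all_goals exact congrArg p (Fin.ext (by simp))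
  exact stmt12_aux G hG G.diam p hstep hdist' hnull x hx hcon
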